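/- Let E denote the standard exponential distribution with cdf F(x) = 1 − e^{−x} on [0,∞). For every integer n ≥ 2: (i) the optimal anonymous pricing revenue satisfies Price(E,n) = sup_{x≥0} x·[1 − (1 − e^{−x})^n] = (H_n − 1)·sup_{c≥0} g_n(c); (ii) the optimal (Myerson) revenue satisfies Myer(E,n) ≥ H_n − 1; and consequently Myer(E,n)/Price(E,n) ≥ 1/(sup_{c≥0} g_n(c)). -/

import Mathlib

open Real Set MeasureTheory Pointwise

/-- `H n` is the `n`-th harmonic number `∑_{i=1}^n 1/i`. -/
noncomputable def H (n : ℕ) : ℝ := ∑ i ∈ Finset.range n, (1 : ℝ) / (i + 1)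

/-- `g n c = c · [1 − (1 − e^{−c(H_n−1)})^n]`. -/
noncomputable def g (n : ℕ) (c : ℝ) : ℝ :=
  c * (1 - (1 - Real.exp (-c * (H n - 1))) ^ n)

/-- The optimal anonymous pricing revenue for `n` bidders with i.i.d. standard exponential
valuations: `Price(E,n) = sup_{x ≥ 0} x·(1 − (1 − e^{−x})^n)`. -/
noncomputable def PriceExp (n : ℕ) : ℝ :=
  sSup ((fun x : ℝ => x * (1 - (1 - Real.exp (-x)) ^ n)) '' Set.Ici 0)

/-- The optimal (Myerson) revenue for `n` bidders with i.i.d. standard exponential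
valuations (the monopoly reserve is `r* = 1`):
`Myer(E,n) = ∫_1^∞ (x − 1)·n·F(x)^{n−1}·f(x) dx` with `F(x) = 1 − e^{−x}`. -/
noncomputable def MyerExp (n : ℕ) : ℝ :=
  ∫ x in Set.Ioi (1 : ℝ),
    (x - 1) * (n : ℝ) * (1 - Real.exp (-x)) ^ (n - 1) * Real.exp (-x)

lemma expF_hasDerivAt (x : ℝ) :
    HasDerivAt (fun y : ℝ => 1 - Real.exp (-y)) (Real.exp (-x)) x := by
  have h1 : HasDerivAt (fun y : ℝ => Real.exp (-y)) (-Real.exp (-x)) x := by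
    have h := (Real.hasDerivAt_exp (-x)).comp x (hasDerivAt_neg x)
    simp only [mul_neg, mul_one] at h
    exact h
  have h := (hasDerivAt_const x (1 : ℝ)).sub h1
  rw [zero_sub, neg_neg] at h
  exact h

lemma G_hasDerivAt (n : ℕ) (x : ℝ) :
    HasDerivAt (fun y : ℝ => (y - 1) * ((1 - Real.exp (-y)) ^ n - 1)
        + ∑ k ∈ Finset.range n, (1 - Real.exp (-y)) ^ (k + 1) / ((k : ℝ) + 1))
      ((x - 1) * (n : ℝ) * (1 - Real.exp (-x)) ^ (n - 1) * Real.exp (-x)) x := by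
  have hFx := expF_hasDerivAt x
  have h1 : HasDerivAt (fun y : ℝ => (y - 1) * ((1 - Real.exp (-y)) ^ n - 1))
      (1 * ((1 - Real.exp (-x)) ^ n - 1)
        + (x - 1) * ((n : ℝ) * (1 - Real.exp (-x)) ^ (n - 1) * Real.exp (-x))) x :=
    ((hasDerivAt_id x).sub_const 1).mul ((hFx.pow n).sub_const 1)
  have h2 : ∀ k ∈ Finset.range n,
      HasDerivAt (fun y : ℝ => (1 - Real.exp (-y)) ^ (k + 1) / ((k : ℝ) + 1))
        ((1 - Real.exp (-x)) ^ k * Real.exp (-x)) x := by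
    intro k _
    have h := (hFx.pow (k + 1)).div_const ((k : ℝ) + 1)
    have hk : ((k : ℝ) + 1) ≠ 0 := by positivity
    refine h.congr_deriv ?_
    push_cast
    field_simp
  have hsum := HasDerivAt.fun_sum h2
  have htot := h1.add hsum
  refine htot.congr_deriv ?_
  have hgeom : ∑ k ∈ Finset.range n, (1 - Real.exp (-x)) ^ k * Real.exp (-x)
      = 1 - (1 - Real.exp (-x)) ^ n := by
    have hg := geom_sum_mul (1 - Real.exp (-x)) n
    rw [← Finset.sum_mul]
    linear_combination -hg
  rw [hgeom]
  ring

lemma one_sub_pow_le (n : ℕ) {x : ℝ} (hx : 0 ≤ x) :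
    1 - (1 - Real.exp (-x)) ^ n ≤ (n : ℝ) * Real.exp (-x) := by
  have he : Real.exp (-x) ≤ 1 := Real.exp_le_one_iff.mpr (by linarith)
  have ha : (-2 : ℝ) ≤ (1 - Real.exp (-x)) - 1 := by
    have := Real.exp_pos (-x); linarith
  have hb := one_add_mul_le_pow ha n
  have : (1 + (n : ℝ) * ((1 - Real.exp (-x)) - 1)) ≤ (1 - Real.exp (-x)) ^ n := by
    convert hb using 2; rfl; ring
  nlinarith

lemma G_tendsto (n : ℕ) :
    Filter.Tendsto (fun y : ℝ => (y - 1) * ((1 - Real.exp (-y)) ^ n - 1)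
        + ∑ k ∈ Finset.range n, (1 - Real.exp (-y)) ^ (k + 1) / ((k : ℝ) + 1))
      Filter.atTop (nhds (H n)) := by
  have hexp : Filter.Tendsto (fun y : ℝ => Real.exp (-y)) Filter.atTop (nhds 0) := by
    simpa using Real.tendsto_exp_neg_atTop_nhds_zero
  have hxe : Filter.Tendsto (fun y : ℝ => y * Real.exp (-y)) Filter.atTop (nhds 0) := by
    simpa using Real.tendsto_pow_mul_exp_neg_atTop_nhds_zero 1
  have hb : Filter.Tendsto (fun y : ℝ => (n : ℝ) * ((y - 1) * Real.exp (-y)))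
      Filter.atTop (nhds 0) := by
    have := (hxe.sub hexp).const_mul (n : ℝ)
    simpa [sub_mul] using this
  have h1 : Filter.Tendsto (fun y : ℝ => (y - 1) * ((1 - Real.exp (-y)) ^ n - 1))
      Filter.atTop (nhds 0) := by
    apply squeeze_zero_norm' _ hb
    filter_upwards [Filter.eventually_ge_atTop (1 : ℝ)] with y hy
    have hy0 : (0 : ℝ) ≤ y := by linarith
    have hkey := one_sub_pow_le n hy0
    have hF0 : 0 ≤ 1 - Real.exp (-y) := by
      have := Real.exp_le_one_iff.mpr (by linarith : -y ≤ 0); linarith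
    have hFn : (1 - Real.exp (-y)) ^ n ≤ 1 :=
      pow_le_one₀ hF0 (by have := Real.exp_pos (-y); linarith)
    rw [Real.norm_eq_abs, abs_mul, abs_of_nonneg (by linarith : (0:ℝ) ≤ y - 1),
      abs_of_nonpos (by linarith : (1 - Real.exp (-y)) ^ n - 1 ≤ 0)]
    have hexppos := Real.exp_pos (-y)
    nlinarith
  have h2 : Filter.Tendsto
      (fun y : ℝ => ∑ k ∈ Finset.range n, (1 - Real.exp (-y)) ^ (k + 1) / ((k : ℝ) + 1))
      Filter.atTop (nhds (H n)) := by
    rw [H]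
    apply tendsto_finset_sum
    intro k _
    have hFk : Filter.Tendsto (fun y : ℝ => (1 - Real.exp (-y)) ^ (k + 1))
        Filter.atTop (nhds 1) := by
      have hc : Filter.Tendsto (fun _ : ℝ => (1:ℝ)) Filter.atTop (nhds 1) := tendsto_const_nhds
      have := (hc.sub hexp).pow (k + 1)
      simpa using this
    simpa using hFk.div_const ((k : ℝ) + 1)
  simpa using h1.add h2

/-- For the standard exponential distribution and `n ≥ 2` bidders:
(i) `Price(E,n) = (H_n − 1)·sup_{c ≥ 0} g_n(c)`;
(ii) `Myer(E,n) ≥ H_n − 1`;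
and consequently `Myer(E,n)/Price(E,n) ≥ 1/(sup_{c ≥ 0} g_n(c))`. -/
theorem exponential_lower_bound (n : ℕ) (hn : 2 ≤ n) :
    PriceExp n = (H n - 1) * sSup (g n '' Set.Ici (0 : ℝ)) ∧
    H n - 1 ≤ MyerExp n ∧
    1 / sSup (g n '' Set.Ici (0 : ℝ)) ≤ MyerExp n / PriceExp n := by
  -- H n - 1 > 0
  have hH2 : H 2 ≤ H n := by
    apply Finset.sum_le_sum_of_subset_of_nonneg (Finset.range_subset_range.mpr hn)
    intro i _ _; positivity
  have hH2v : H 2 = 3 / 2 := by norm_num [H, Finset.sum_range_succ]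
  have hH : (0 : ℝ) < H n - 1 := by rw [hH2v] at hH2; linarith
  -- (i) set equality and scaling
  have hSetEq : (fun x : ℝ => x * (1 - (1 - Real.exp (-x)) ^ n)) '' Set.Ici 0
      = (H n - 1) • (g n '' Set.Ici 0) := by
    ext y
    simp only [Set.mem_image, Set.mem_smul_set, Set.mem_Ici, smul_eq_mul]
    constructor
    · rintro ⟨x, hx, rfl⟩
      refine ⟨g n (x / (H n - 1)), ⟨x / (H n - 1), by positivity, rfl⟩, ?_⟩
      have hx' : -(x / (H n - 1)) * (H n - 1) = -x := by field_simp
      rw [g, hx']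
      field_simp
    · rintro ⟨_, ⟨c, hc, rfl⟩, rfl⟩
      refine ⟨c * (H n - 1), by positivity, ?_⟩
      rw [g]
      have : -(c * (H n - 1)) = -c * (H n - 1) := by ring
      rw [this]
      ring
  have hPrice : PriceExp n = (H n - 1) * sSup (g n '' Set.Ici 0) := by
    rw [PriceExp, hSetEq, Real.sSup_smul_of_nonneg hH.le, smul_eq_mul]
  -- (ii) Myerson revenue
  have hMyer : H n - 1 ≤ MyerExp n := by
    have hint : MyerExp n = H n -
        ((1 - 1) * ((1 - Real.exp (-1)) ^ n - 1)
          + ∑ k ∈ Finset.range n, (1 - Real.exp (-1)) ^ (k + 1) / ((k : ℝ) + 1)) := by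
      rw [MyerExp]
      exact integral_Ioi_of_hasDerivAt_of_nonneg
        (G_hasDerivAt n 1).continuousAt.continuousWithinAt
        (fun x _ => G_hasDerivAt n x)
        (fun x hx => by
          have hx1 : (1 : ℝ) < x := hx
          have hF0 : 0 ≤ 1 - Real.exp (-x) := by
            have := Real.exp_le_one_iff.mpr (by linarith : -x ≤ 0); linarith
          exact mul_nonneg (mul_nonneg (mul_nonneg (by linarith) (Nat.cast_nonneg n))
            (pow_nonneg hF0 _)) (Real.exp_pos _).le)
        (G_tendsto n)
    have ha0 : 0 ≤ 1 - Real.exp (-1) := by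
      have := Real.exp_le_one_iff.mpr (by norm_num : (-1 : ℝ) ≤ 0); linarith
    have ha : |1 - Real.exp (-1)| < 1 := by
      rw [abs_of_nonneg ha0]
      have := Real.exp_pos (-1); linarith
    have hs := Real.hasSum_pow_div_log_of_abs_lt_one ha
    have hsum1 : HasSum (fun k : ℕ => (1 - Real.exp (-1)) ^ (k + 1) / ((k : ℝ) + 1)) 1 := by
      have hval : -Real.log (1 - (1 - Real.exp (-1))) = 1 := by
        simp [Real.log_exp]
      rw [hval] at hs
      convert hs using 2 with k
    have hle : ∑ k ∈ Finset.range n, (1 - Real.exp (-1)) ^ (k + 1) / ((k : ℝ) + 1) ≤ 1 :=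
      sum_le_hasSum (Finset.range n)
        (fun k _ => div_nonneg (pow_nonneg ha0 _) (by positivity)) hsum1
    rw [hint]
    have : (1 - 1 : ℝ) * ((1 - Real.exp (-1)) ^ n - 1) = 0 := by ring
    rw [this, zero_add]
    linarith
  refine ⟨hPrice, hMyer, ?_⟩
  -- (iii)
  have hbdd : BddAbove (g n '' Set.Ici (0 : ℝ)) := by
    refine ⟨(n : ℝ) / (H n - 1), ?_⟩
    rintro y ⟨c, hc, rfl⟩
    have hc0 : (0 : ℝ) ≤ c := hc
    have ht0 : 0 ≤ c * (H n - 1) := by positivity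
    have hkey := one_sub_pow_le n ht0
    have hneg : -c * (H n - 1) = -(c * (H n - 1)) := by ring
    have hte : c * (H n - 1) * Real.exp (-(c * (H n - 1))) ≤ 1 := by
      rw [Real.exp_neg, mul_inv_le_iff₀ (Real.exp_pos _), one_mul]
      linarith [Real.add_one_le_exp (c * (H n - 1))]
    rw [g, hneg]
    have hepos := Real.exp_pos (-(c * (H n - 1)))
    calc c * (1 - (1 - Real.exp (-(c * (H n - 1)))) ^ n)
        ≤ c * ((n : ℝ) * Real.exp (-(c * (H n - 1)))) := by
          apply mul_le_mul_of_nonneg_left _ hc0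
          convert hkey using 3
      _ ≤ (n : ℝ) / (H n - 1) := by
          rw [le_div_iff₀ hH]
          have h1 := mul_le_mul_of_nonneg_left hte (Nat.cast_nonneg n)
          nlinarith [h1]
  have hmem : g n 1 ∈ g n '' Set.Ici (0 : ℝ) := ⟨1, by norm_num, rfl⟩
  have hg1 : 0 < g n 1 := by
    rw [g]
    have h0 : 0 ≤ 1 - Real.exp (-1 * (H n - 1)) := by
      have := Real.exp_le_one_iff.mpr (by nlinarith : -1 * (H n - 1) ≤ 0); linarith
    have h1 : (1 - Real.exp (-1 * (H n - 1))) < 1 := by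
      have := Real.exp_pos (-1 * (H n - 1)); linarith
    have := pow_lt_one₀ h0 h1 (by omega : n ≠ 0)
    nlinarith
  have hS : 0 < sSup (g n '' Set.Ici (0 : ℝ)) := lt_of_lt_of_le hg1 (le_csSup hbdd hmem)
  rw [hPrice]
  have hP : 0 < (H n - 1) * sSup (g n '' Set.Ici (0 : ℝ)) := by positivity
  calc 1 / sSup (g n '' Set.Ici (0 : ℝ))
      = (H n - 1) / ((H n - 1) * sSup (g n '' Set.Ici (0 : ℝ))) := by
        field_simp
    _ ≤ MyerExp n / ((H n - 1) * sSup (g n '' Set.Ici (0 : ℝ))) := by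
        gcongr
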